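/- Fix k ∈ ℕ with k ≥ 2, and let B be the real (2^k − 1) × (2^k − 1) matrix with rows and columns indexed by the nonzero vectors of {0,1}^k, where B_{uv} = ⟨u,v⟩ mod 2 (viewed as a real number). Then B is invertible, and for every vector v ∈ ℝ^{2^k − 1}, ‖B^{-1}v‖_∞ ≤ 2‖v‖_∞. -/

import Mathlib

/-- The real `(2^k − 1) × (2^k − 1)` matrix indexed by nonzero vectors of `𝔽₂^k`,
with `B_{uv} = ⟨u,v⟩ mod 2`, viewed as a real number `0` or `1`. -/
def Bmat (k : ℕ) : Matrix {v : Fin k → ZMod 2 // v ≠ 0} {v : Fin k → ZMod 2 // v ≠ 0} ℝ :=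
  Matrix.of fun u v => if dotProduct u.1 v.1 = 1 then 1 else 0

open Finset Matrix

/-- Fibers of a surjective additive hom between finite groups all have card `|V|/|W|`. -/
lemma fiber_card {V W : Type*} [AddCommGroup V] [Fintype V] [DecidableEq V]
    [AddCommGroup W] [Fintype W] [DecidableEq W]
    (f : V →+ W) (hf : Function.Surjective f) (y : W) :
    (Finset.univ.filter fun v => f v = y).card * Fintype.card W = Fintype.card V := by
  have hconst : ∀ y₁ y₂ : W, (Finset.univ.filter fun v => f v = y₁).card
      = (Finset.univ.filter fun v => f v = y₂).card := by
    intro y₁ y₂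
    obtain ⟨d, hd⟩ := hf (y₂ - y₁)
    apply Finset.card_bij (fun v _ => v + d)
    · intro a ha
      simp only [Finset.mem_filter, Finset.mem_univ, true_and] at ha ⊢
      rw [map_add, ha, hd]; abel
    · intro a _ b _ h; exact add_right_cancel h
    · intro b hb
      simp only [Finset.mem_filter, Finset.mem_univ, true_and] at hb
      refine ⟨b - d, ?_, by abel⟩
      simp only [Finset.mem_filter, Finset.mem_univ, true_and]
      rw [map_sub, hb, hd]; abel
  have h1 : (Finset.univ : Finset V).card
      = ∑ y' : W, (Finset.univ.filter fun v => f v = y').card :=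
    Finset.card_eq_sum_card_fiberwise (fun x _ => Finset.mem_univ _)
  have h2 : ∑ y' : W, (Finset.univ.filter fun v => f v = y').card
      = ∑ _y' : W, (Finset.univ.filter fun v => f v = y).card :=
    Finset.sum_congr rfl fun y' _ => hconst y' y
  rw [Fintype.card, Fintype.card, h1, h2, Finset.sum_const, Finset.card_univ,
    smul_eq_mul, mul_comm]

lemma zmod2_cases : ∀ a : ZMod 2, a = 0 ∨ a = 1 := by decide

/-- If `u ≠ 0` and `u ≠ w`, there is `v` with `⟨u,v⟩ = 1` and `⟨w,v⟩ = 0`. -/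
lemma exists_dot {k : ℕ} (u w : Fin k → ZMod 2) (hu : u ≠ 0) (huw : u ≠ w) :
    ∃ v, dotProduct u v = 1 ∧ dotProduct w v = 0 := by
  by_cases h : ∃ j, u j = 1 ∧ w j = 0
  · obtain ⟨j, hj1, hj2⟩ := h
    exact ⟨Pi.single j 1, by simp [dotProduct_single, hj1, hj2]⟩
  · push_neg at h
    obtain ⟨j, hj⟩ : ∃ j, u j ≠ w j := by
      by_contra hc; push_neg at hc; exact huw (funext hc)
    have huj : u j = 0 := by
      rcases zmod2_cases (u j) with h0 | h1
      · exact h0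
      · rcases zmod2_cases (w j) with g0 | g1
        · exact absurd g0 (h j h1)
        · exact absurd (h1.trans g1.symm) hj
    have hwj : w j = 1 := by
      rcases zmod2_cases (w j) with g0 | g1
      · exact absurd (huj.trans g0.symm) hj
      · exact g1
    obtain ⟨i, hi⟩ : ∃ i, u i ≠ 0 := by
      by_contra hc; push_neg at hc; exact hu (funext hc)
    have hui : u i = 1 := (zmod2_cases (u i)).resolve_left hi
    have hwi : w i = 1 := by
      rcases zmod2_cases (w i) with g0 | g1
      · exact absurd g0 (h i hui)
      · exact g1
    have hij : i ≠ j := fun e => hi (e ▸ huj)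
    refine ⟨Pi.single i 1 + Pi.single j 1, ?_, ?_⟩
    · rw [dotProduct_add, dotProduct_single, dotProduct_single,
        hui, huj]; ring
    · rw [dotProduct_add, dotProduct_single, dotProduct_single,
        hwi, hwj]; decide

/-- The dot product with a fixed vector, as an additive hom. -/
def dotHom {k : ℕ} (u : Fin k → ZMod 2) : (Fin k → ZMod 2) →+ ZMod 2 where
  toFun v := dotProduct u v
  map_zero' := dotProduct_zero u
  map_add' x y := dotProduct_add u x y

/-- The pair of dot products with two fixed vectors, as an additive hom. -/
def dotHom2 {k : ℕ} (u w : Fin k → ZMod 2) : (Fin k → ZMod 2) →+ ZMod 2 × ZMod 2 where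
  toFun v := (dotProduct u v, dotProduct w v)
  map_zero' := by simp
  map_add' x y := by simp [dotProduct_add, Prod.ext_iff]

lemma card_dot_one {k : ℕ} (u : Fin k → ZMod 2) (hu : u ≠ 0) :
    (Finset.univ.filter fun v : Fin k → ZMod 2 =>
      dotProduct u v = 1).card * 2 = 2 ^ k := by
  have hsurj : Function.Surjective (dotHom u) := by
    intro y
    rcases zmod2_cases y with rfl | rfl
    · exact ⟨0, dotProduct_zero u⟩
    · obtain ⟨v, hv, -⟩ := exists_dot u 0 hu hu
      exact ⟨v, hv⟩
  have h := fiber_card (dotHom u) hsurj 1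
  simp only [ZMod.card, Fintype.card_fun, Fintype.card_fin] at h
  exact h

lemma card_dot_pair {k : ℕ} (u w : Fin k → ZMod 2) (hu : u ≠ 0) (hw : w ≠ 0) (huw : u ≠ w) :
    (Finset.univ.filter fun v : Fin k → ZMod 2 =>
      dotProduct u v = 1 ∧ dotProduct w v = 1).card * 4 = 2 ^ k := by
  obtain ⟨v₁, h11, h10⟩ := exists_dot u w hu huw
  obtain ⟨v₂, h21, h20⟩ := exists_dot w u hw (Ne.symm huw)
  have hsurj : Function.Surjective (dotHom2 u w) := by
    rintro ⟨a, b⟩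
    rcases zmod2_cases a with rfl | rfl <;> rcases zmod2_cases b with rfl | rfl
    · exact ⟨0, by simp [dotHom2]⟩
    · exact ⟨v₂, by simp [dotHom2, h21, h20]⟩
    · exact ⟨v₁, by simp [dotHom2, h11, h10]⟩
    · exact ⟨v₁ + v₂, by simp [dotHom2, dotProduct_add, h11, h10, h21, h20]⟩
  have h := fiber_card (dotHom2 u w) hsurj (1, 1)
  simpa [dotHom2, Prod.ext_iff] using h

/-- The explicit inverse of `Bmat k`: entries `± 2^{1-k}`. -/
noncomputable def Cmat (k : ℕ) :
    Matrix {v : Fin k → ZMod 2 // v ≠ 0} {v : Fin k → ZMod 2 // v ≠ 0} ℝ :=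
  Matrix.of fun u v => ((2:ℝ) ^ (k-1))⁻¹ * (if dotProduct u.1 v.1 = 1 then 1 else -1)

lemma sum_subtype_ne {k : ℕ} (g : (Fin k → ZMod 2) → ℝ) (hg : g 0 = 0) :
    (∑ v : {v : Fin k → ZMod 2 // v ≠ 0}, g v.1) = ∑ v : Fin k → ZMod 2, g v := by
  rw [← Finset.sum_subtype (Finset.univ.filter fun v : Fin k → ZMod 2 => v ≠ 0)
      (by simp) g]
  exact Finset.sum_filter_of_ne (fun x _ hx => by rintro rfl; exact hx hg)

lemma two_pow_k {k : ℕ} (hk : 1 ≤ k) : (2:ℝ) ^ k = 2 ^ (k-1) * 2 := by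
  rw [← pow_succ]; congr 1; omega

lemma Bmat_mul_Cmat {k : ℕ} (hk : 2 ≤ k) : Bmat k * Cmat k = 1 := by
  ext u w
  rw [Matrix.mul_apply, Matrix.one_apply]
  set c : ℝ := ((2:ℝ) ^ (k-1))⁻¹ with hc
  have key : ∀ v : {v : Fin k → ZMod 2 // v ≠ 0}, Bmat k u v * Cmat k v w =
      c * (2 * (if dotProduct u.1 v.1 = 1 ∧ dotProduct w.1 v.1 = 1 then (1:ℝ) else 0)
        - (if dotProduct u.1 v.1 = 1 then (1:ℝ) else 0)) := by
    intro v
    simp only [Bmat, Cmat, Matrix.of_apply, dotProduct_comm v.1 w.1]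
    by_cases hp : dotProduct u.1 v.1 = 1 <;>
      by_cases hq : dotProduct w.1 v.1 = 1 <;> simp [hp, hq] <;> ring
  rw [Finset.sum_congr rfl (fun v _ => key v), ← Finset.mul_sum, Finset.sum_sub_distrib,
    ← Finset.mul_sum]
  have hA := (sum_subtype_ne (fun v => if dotProduct u.1 v = 1 ∧ dotProduct w.1 v = 1 then (1:ℝ) else 0) (by simp)).trans (Finset.sum_boole _ _)
  have hB := (sum_subtype_ne (fun v => if dotProduct u.1 v = 1 then (1:ℝ) else 0) (by simp)).trans (Finset.sum_boole _ _)
  rw [hA, hB]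
  have haN := card_dot_one u.1 u.2
  have ha : ((Finset.univ.filter fun v : Fin k → ZMod 2 =>
      dotProduct u.1 v = 1).card : ℝ) * 2 = 2 ^ k := by exact_mod_cast congrArg Nat.cast haN
  have h2k : (2:ℝ) ^ k = 2 ^ (k-1) * 2 := two_pow_k (by omega)
  have hcpos : (0:ℝ) < 2 ^ (k-1) := by positivity
  by_cases huw : u = w
  · subst huw
    simp only [and_self, if_pos rfl, ↓reduceIte]
    have : ((Finset.univ.filter fun v : Fin k → ZMod 2 =>
        dotProduct u.1 v = 1).card : ℝ) = 2 ^ (k-1) := by linarith [h2k ▸ ha]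
    rw [this, hc]
    field_simp
    ring
  · have hbN := card_dot_pair u.1 w.1 u.2 w.2 (fun e => huw (Subtype.ext e))
    have hb : ((Finset.univ.filter fun v : Fin k → ZMod 2 =>
        dotProduct u.1 v = 1 ∧ dotProduct w.1 v = 1).card : ℝ) * 4 = 2 ^ k := by
      exact_mod_cast congrArg Nat.cast hbN
    rw [if_neg huw]
    have : 2 * ((Finset.univ.filter fun v : Fin k → ZMod 2 =>
        dotProduct u.1 v = 1 ∧ dotProduct w.1 v = 1).card : ℝ)
        = ((Finset.univ.filter fun v : Fin k → ZMod 2 =>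
          dotProduct u.1 v = 1).card : ℝ) := by linarith
    rw [this, sub_self, mul_zero]

lemma Cmat_mul_Bmat {k : ℕ} (hk : 2 ≤ k) : Cmat k * Bmat k = 1 := by
  have hBs : (Bmat k)ᵀ = Bmat k := by
    ext u w; simp [Bmat, Matrix.transpose_apply, dotProduct_comm]
  have hCs : (Cmat k)ᵀ = Cmat k := by
    ext u w; simp [Cmat, Matrix.transpose_apply, dotProduct_comm]
  calc Cmat k * Bmat k = (Cmat k)ᵀ * (Bmat k)ᵀ := by rw [hBs, hCs]
    _ = (Bmat k * Cmat k)ᵀ := (Matrix.transpose_mul _ _).symm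
    _ = (1 : Matrix _ _ ℝ)ᵀ := by rw [Bmat_mul_Cmat hk]
    _ = 1 := Matrix.transpose_one

/-- `B` is invertible and `‖B⁻¹v‖_∞ ≤ 2‖v‖_∞` for every `v` (the norm on
`{v // v ≠ 0} → ℝ` is the entrywise sup norm). -/
theorem Bmat_inv_bound (k : ℕ) (hk : 2 ≤ k) :
    IsUnit (Bmat k) ∧
      ∀ v : {v : Fin k → ZMod 2 // v ≠ 0} → ℝ, ‖(Bmat k)⁻¹.mulVec v‖ ≤ 2 * ‖v‖ := by
  have hBC := Bmat_mul_Cmat hk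
  have hCB := Cmat_mul_Bmat hk
  refine ⟨⟨⟨Bmat k, Cmat k, hBC, hCB⟩, rfl⟩, ?_⟩
  intro x
  rw [Matrix.inv_eq_right_inv hBC]
  have hcpos : (0:ℝ) < 2 ^ (k-1) := by positivity
  rw [pi_norm_le_iff_of_nonneg (by positivity)]
  intro u
  have hentry : ∀ v, ‖Cmat k u v * x v‖ ≤ ((2:ℝ) ^ (k-1))⁻¹ * ‖x‖ := by
    intro v
    rw [norm_mul]
    have h1 : ‖Cmat k u v‖ = ((2:ℝ) ^ (k-1))⁻¹ := by
      simp only [Cmat, Matrix.of_apply]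
      split_ifs with h
      · rw [mul_one, Real.norm_eq_abs, abs_of_pos (by positivity)]
      · rw [mul_neg_one, norm_neg, Real.norm_eq_abs, abs_of_pos (by positivity)]
    rw [h1]
    exact mul_le_mul_of_nonneg_left (norm_le_pi_norm x v) (by positivity)
  calc ‖(Cmat k).mulVec x u‖ ≤ ∑ v, ‖Cmat k u v * x v‖ := by
        simp only [Matrix.mulVec, dotProduct]
        exact norm_sum_le _ _
    _ ≤ ∑ _v : {v : Fin k → ZMod 2 // v ≠ 0}, ((2:ℝ) ^ (k-1))⁻¹ * ‖x‖ :=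
        Finset.sum_le_sum fun v _ => hentry v
    _ = (Fintype.card {v : Fin k → ZMod 2 // v ≠ 0} : ℝ) * (((2:ℝ) ^ (k-1))⁻¹ * ‖x‖) := by
        rw [Finset.sum_const, Finset.card_univ, nsmul_eq_mul]
    _ ≤ (2:ℝ) ^ k * (((2:ℝ) ^ (k-1))⁻¹ * ‖x‖) := by
        apply mul_le_mul_of_nonneg_right _ (by positivity)
        have hle := Fintype.card_subtype_le (fun v : Fin k → ZMod 2 => v ≠ 0)
        have hcard : Fintype.card (Fin k → ZMod 2) = 2 ^ k := by simp
        exact_mod_cast hcard ▸ hle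
    _ = 2 * ‖x‖ := by
        rw [two_pow_k (by omega)]
        field_simp
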